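/- Suppose G and G′ are both normal complements of a subgroup U in a finite group Γ. Then the map φ : G → G′ sending g to gγ (where γ ∈ U is the unique element with gγ ∈ G′) induces an anti-isomorphism G/(G ∩ G′) → G′/(G ∩ G′). -/

import Mathlib

open Subgroup

lemma exists_retraction_of_isComplement' {Γ : Type*} [Group Γ] (H U : Subgroup Γ)
    [H.Normal] (hc : Subgroup.IsComplement' H U) :
    ∃ P : Γ →* Γ, (∀ x, P x ∈ U) ∧ (∀ x, x * (P x)⁻¹ ∈ H) ∧ (∀ x, P x = 1 ↔ x ∈ H) := by
  have hbij : Function.Bijective ((QuotientGroup.mk' H).comp U.subtype) := by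
    constructor
    · intro u v huv
      have hH : (u : Γ)⁻¹ * v ∈ H := by rwa [← QuotientGroup.eq]
      have hU : (u : Γ)⁻¹ * v ∈ U := mul_mem (inv_mem u.2) v.2
      have hb : (u : Γ)⁻¹ * v ∈ H ⊓ U := ⟨hH, hU⟩
      rw [hc.disjoint.eq_bot, Subgroup.mem_bot] at hb
      ext
      exact inv_mul_eq_one.mp hb
    · intro x
      induction x using QuotientGroup.induction_on with
      | H x =>
        refine ⟨(hc.equiv x).2, ?_⟩
        simp only [MonoidHom.comp_apply, QuotientGroup.mk'_apply]
        rw [QuotientGroup.eq]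
        show ((hc.equiv x).2 : Γ)⁻¹ * x ∈ H
        have hx : ((hc.equiv x).1 : Γ) * (hc.equiv x).2 = x := hc.equiv_fst_mul_equiv_snd x
        have hgoal : ((hc.equiv x).2 : Γ)⁻¹ * x =
            ((hc.equiv x).2 : Γ)⁻¹ * ((hc.equiv x).1 : Γ) * ((hc.equiv x).2 : Γ) := by
          rw [mul_assoc, hx]
        rw [hgoal]
        have hfst : ((hc.equiv x).1 : Γ) ∈ H := (hc.equiv x).1.2
        have := Subgroup.Normal.conj_mem ‹H.Normal› _ hfst (((hc.equiv x).2 : Γ))⁻¹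
        simpa using this
  let e : U ≃* (Γ ⧸ H) := MulEquiv.ofBijective _ hbij
  refine ⟨U.subtype.comp (e.symm.toMonoidHom.comp (QuotientGroup.mk' H)), fun x => (e.symm _).2,
    ?_, ?_⟩
  · intro x
    have key : QuotientGroup.mk ((e.symm.toMonoidHom (QuotientGroup.mk x) : U) : Γ) =
        (QuotientGroup.mk x : Γ ⧸ H) :=
      e.apply_symm_apply (QuotientGroup.mk x : Γ ⧸ H)
    rw [← QuotientGroup.eq_one_iff (G := Γ)]
    simp only [MonoidHom.comp_apply, QuotientGroup.mk'_apply, Subgroup.coe_subtype]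
    rw [QuotientGroup.mk_mul, QuotientGroup.mk_inv, key]
    simp
  · intro x
    simp only [MonoidHom.comp_apply, QuotientGroup.mk'_apply, Subgroup.coe_subtype]
    rw [← QuotientGroup.eq_one_iff (G := Γ) x]
    constructor
    · intro h
      have : e.symm.toMonoidHom (QuotientGroup.mk x) = 1 := by
        ext; simpa using h
      have := congrArg e this
      simpa using this
    · intro h
      rw [h]
      simp




/-- If `G` and `G′` are normal complements of a subgroup `U` in a finite group `Γ`,
then the map `φ : G → G′` sending `g` to `gγ` (with `γ ∈ U` the unique element such
that `gγ ∈ G′`) induces an anti-isomorphism `G/(G ∩ G′) → G′/(G ∩ G′)`. -/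
theorem anti_isomorphism_of_two_normal_complements {Γ : Type*} [Group Γ] [Finite Γ]
    (U G G' : Subgroup Γ) [G.Normal] [G'.Normal]
    (h1 : Subgroup.IsComplement' G U) (h2 : Subgroup.IsComplement' G' U) :
    ∃ φ : G → G',
      (∀ g : G, ∃ γ ∈ U, (φ g : Γ) = (g : Γ) * γ) ∧
      ∃ ψ : (G ⧸ (G ⊓ G').subgroupOf G) ≃ (G' ⧸ (G ⊓ G').subgroupOf G'),
        (∀ g : G, ψ (QuotientGroup.mk g) = QuotientGroup.mk (φ g)) ∧
        (∀ x y : G ⧸ (G ⊓ G').subgroupOf G, ψ (x * y) = ψ y * ψ x) := by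
  obtain ⟨p, hpU, hpG', hpker⟩ := exists_retraction_of_isComplement' G' U h2
  obtain ⟨q, hqU, hqG, hqker⟩ := exists_retraction_of_isComplement' G U h1
  -- `p` kills `G'`, `q` kills `G`
  have hp1 : ∀ x ∈ G', p x = 1 := fun x hx => (hpker x).mpr hx
  have hq1 : ∀ x ∈ G, q x = 1 := fun x hx => (hqker x).mpr hx
  -- `p` and `q` fix `U`
  have hpfix : ∀ u ∈ U, p u = u := by
    intro u hu
    have h1' : u * (p u)⁻¹ ∈ G' := hpG' u
    have h2' : u * (p u)⁻¹ ∈ U := mul_mem hu (inv_mem (hpU u))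
    have : u * (p u)⁻¹ ∈ G' ⊓ U := ⟨h1', h2'⟩
    rw [h2.disjoint.eq_bot, Subgroup.mem_bot] at this
    exact (mul_inv_eq_one.mp this).symm
  have hqfix : ∀ u ∈ U, q u = u := by
    intro u hu
    have h1' : u * (q u)⁻¹ ∈ G := hqG u
    have h2' : u * (q u)⁻¹ ∈ U := mul_mem hu (inv_mem (hqU u))
    have : u * (q u)⁻¹ ∈ G ⊓ U := ⟨h1', h2'⟩
    rw [h1.disjoint.eq_bot, Subgroup.mem_bot] at this
    exact (mul_inv_eq_one.mp this).symm
  -- conjugation preserves `G ⊓ G'`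
  have hconj : ∀ x ∈ G ⊓ G', ∀ u : Γ, u * x * u⁻¹ ∈ G ⊓ G' := fun x hx u =>
    ⟨‹G.Normal›.conj_mem x hx.1 u, ‹G'.Normal›.conj_mem x hx.2 u⟩
  -- the maps
  let φ : G → G' := fun g => ⟨(g : Γ) * (p g)⁻¹, hpG' g⟩
  let φ' : G' → G := fun x => ⟨(x : Γ) * (q x)⁻¹, hqG x⟩
  have hφcoe : ∀ g : G, (φ g : Γ) = (g : Γ) * (p g)⁻¹ := fun g => rfl
  have hφ'coe : ∀ x : G', (φ' x : Γ) = (x : Γ) * (q x)⁻¹ := fun x => rfl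
  -- q of φ g, p of φ' x
  have hqφ : ∀ g : G, q (φ g) = (p g)⁻¹ := by
    intro g
    rw [hφcoe, map_mul, map_inv, hq1 _ g.2, hqfix _ (hpU (g : Γ)), one_mul]
  have hpφ' : ∀ x : G', p (φ' x) = (q x)⁻¹ := by
    intro x
    rw [hφ'coe, map_mul, map_inv, hp1 _ x.2, hpfix _ (hqU (x : Γ)), one_mul]
  have hleft : ∀ g : G, φ' (φ g) = g := by
    intro g
    ext
    rw [hφ'coe, hqφ, hφcoe]
    group
  have hright : ∀ x : G', φ (φ' x) = x := by
    intro x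
    ext
    rw [hφcoe, hpφ', hφ'coe]
    group
  -- well-definedness
  have hwd : ∀ a b : G, (QuotientGroup.leftRel ((G ⊓ G').subgroupOf G)).r a b →
      (QuotientGroup.leftRel ((G ⊓ G').subgroupOf G')).r (φ a) (φ b) := by
    intro a b hab
    rw [QuotientGroup.leftRel_apply, Subgroup.mem_subgroupOf] at hab ⊢
    have hmem : ((a : Γ)⁻¹ * b) ∈ G ⊓ G' := hab
    have hpb : p b = p a := by
      have : p ((a : Γ)⁻¹ * b) = 1 := hp1 _ hmem.2
      rw [map_mul, map_inv] at this
      exact (inv_mul_eq_one.mp this).symm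
    have : ((φ a : Γ))⁻¹ * (φ b) = p a * ((a : Γ)⁻¹ * b) * (p a)⁻¹ := by
      rw [hφcoe, hφcoe, hpb]
      group
    rw [show (((φ a)⁻¹ * φ b : G') : Γ) = ((φ a : Γ))⁻¹ * (φ b) by simp, this]
    exact hconj _ hmem _
  have hwd' : ∀ a b : G', (QuotientGroup.leftRel ((G ⊓ G').subgroupOf G')).r a b →
      (QuotientGroup.leftRel ((G ⊓ G').subgroupOf G)).r (φ' a) (φ' b) := by
    intro a b hab
    rw [QuotientGroup.leftRel_apply, Subgroup.mem_subgroupOf] at hab ⊢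
    have hmem : ((a : Γ)⁻¹ * b) ∈ G ⊓ G' := hab
    have hqb : q b = q a := by
      have : q ((a : Γ)⁻¹ * b) = 1 := hq1 _ hmem.1
      rw [map_mul, map_inv] at this
      exact (inv_mul_eq_one.mp this).symm
    have : ((φ' a : Γ))⁻¹ * (φ' b) = q a * ((a : Γ)⁻¹ * b) * (q a)⁻¹ := by
      rw [hφ'coe, hφ'coe, hqb]
      group
    rw [show (((φ' a)⁻¹ * φ' b : G) : Γ) = ((φ' a : Γ))⁻¹ * (φ' b) by simp, this]
    exact hconj _ hmem _
  let ψ : (G ⧸ (G ⊓ G').subgroupOf G) ≃ (G' ⧸ (G ⊓ G').subgroupOf G') :=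
    { toFun := Quotient.map' φ hwd
      invFun := Quotient.map' φ' hwd'
      left_inv := by
        intro x
        induction x using Quotient.inductionOn' with
        | h a => simp only [Quotient.map'_mk'', hleft]
      right_inv := by
        intro x
        induction x using Quotient.inductionOn' with
        | h a => simp only [Quotient.map'_mk'', hright] }
  have hψmk : ∀ a : G, ψ (QuotientGroup.mk a) = QuotientGroup.mk (φ a) := fun a => rfl
  refine ⟨φ, fun g => ⟨(p g)⁻¹, inv_mem (hpU _), rfl⟩, ψ, hψmk, ?_⟩
  intro x y
  induction x using Quotient.inductionOn' with
  | h g =>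
    induction y using Quotient.inductionOn' with
    | h h' =>
      have hx : (Quotient.mk'' g : G ⧸ (G ⊓ G').subgroupOf G) = QuotientGroup.mk g := rfl
      have hy : (Quotient.mk'' h' : G ⧸ (G ⊓ G').subgroupOf G) = QuotientGroup.mk h' := rfl
      rw [hx, hy, ← QuotientGroup.mk_mul, hψmk, hψmk, hψmk, ← QuotientGroup.mk_mul,
        QuotientGroup.eq, Subgroup.mem_subgroupOf]
      have key : (((φ (g * h'))⁻¹ * (φ h' * φ g) : G') : Γ) =
          ((φ (g * h') : Γ))⁻¹ * ((φ h' : Γ) * (φ g : Γ)) := by simp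
      rw [key]
      refine ⟨?_, ?_⟩
      · apply (hqker _).mp
        rw [hφcoe, hφcoe, hφcoe]
        have hc : ((g * h' : G) : Γ) = (g : Γ) * (h' : Γ) := rfl
        rw [hc]
        simp only [map_mul, map_inv, hq1 _ g.2, hq1 _ h'.2,
          hqfix _ (hpU (g : Γ)), hqfix _ (hpU (h' : Γ))]
        group
      · exact G'.mul_mem (G'.inv_mem (φ (g * h')).2) (G'.mul_mem (φ h').2 (φ g).2)
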